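/- Let f : 2^X → ℝ be a nonnegative, monotone decreasing, supermodular function on a finite ground set X. Define ℓ(A) = ∑_{j∈A} f_∅(j) and g(A) = −ℓ(A) − f(X∖A). Then g is submodular and monotone increasing; moreover, if f(X) = 0 then g is nonnegative. -/

import Mathlib

/-- Lemma A.2: for a nonnegative, monotone decreasing, supermodular `f`, with
`ℓ(A) = ∑_{j∈A} f_∅(j)` and `g(A) = -ℓ(A) - f(X∖A)`, the function `g` is submodular and
monotone increasing; moreover, if `f(X) = 0` then `g` is nonnegative. -/
theorem stmt_14 {α : Type*} [Fintype α] [DecidableEq α]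
    (f : Finset α → ℝ)
    (hnonneg : ∀ A : Finset α, 0 ≤ f A)
    (hmono : ∀ A B : Finset α, A ⊆ B → f B ≤ f A)
    (hsupmod : ∀ A B : Finset α, A ⊆ B → ∀ j, j ∉ B →
      f (insert j A) - f A ≤ f (insert j B) - f B)
    (ℓ g : Finset α → ℝ)
    (hℓ : ∀ A : Finset α, ℓ A = ∑ j ∈ A, (f {j} - f ∅))
    (hg : ∀ A : Finset α, g A = -ℓ A - f (Finset.univ \ A)) :
    (∀ A B : Finset α, A ⊆ B → ∀ j, j ∉ B →
      g (insert j B) - g B ≤ g (insert j A) - g A) ∧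
    (∀ A B : Finset α, A ⊆ B → g A ≤ g B) ∧
    (f Finset.univ = 0 → ∀ A : Finset α, 0 ≤ g A) := by
  classical
  have key : ∀ (A : Finset α) (j : α), j ∉ A →
      g (insert j A) - g A =
        -(f {j} - f ∅) +
          (f (insert j ((Finset.univ \ A).erase j)) - f ((Finset.univ \ A).erase j)) := by
    intro A j hj
    have hjmem : j ∈ Finset.univ \ A := by simp [hj]
    have h1 : Finset.univ \ insert j A = (Finset.univ \ A).erase j := by
      ext x
      simp [Finset.mem_erase, and_comm]
    have h2 : insert j ((Finset.univ \ A).erase j) = Finset.univ \ A :=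
      Finset.insert_erase hjmem
    have h2' : f (Finset.univ \ A) = f (insert j ((Finset.univ \ A).erase j)) := by rw [h2]
    rw [hg, hg, hℓ, hℓ, Finset.sum_insert hj, h1, h2']
    ring
  have hjne : ∀ (A : Finset α) (j : α), j ∉ (Finset.univ \ A).erase j :=
    fun A j => Finset.notMem_erase j _
  have hstep : ∀ (D : Finset α) (j : α), g D ≤ g (insert j D) := by
    intro D j
    by_cases h : j ∈ D
    · simp [Finset.insert_eq_self.mpr h]
    · have hk := key D j h
      have hs := hsupmod ∅ ((Finset.univ \ D).erase j) (Finset.empty_subset _) j (hjne D j)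
      have hje : (insert j (∅ : Finset α)) = {j} := rfl
      rw [hje] at hs
      linarith
  have hmonog : ∀ A B : Finset α, A ⊆ B → g A ≤ g B := by
    have haux : ∀ (C A : Finset α), g A ≤ g (A ∪ C) := by
      intro C
      induction C using Finset.induction_on with
      | empty => intro A; simp
      | insert _ _ hj ih =>
        intro A
        rw [Finset.union_insert]
        exact le_trans (ih A) (hstep _ _)
    intro A B hAB
    have := haux B A
    rwa [Finset.union_eq_right.mpr hAB] at this
  refine ⟨?_, hmonog, ?_⟩
  · intro A B hAB j hjB
    have hjA : j ∉ A := fun h => hjB (hAB h)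
    rw [key B j hjB, key A j hjA]
    have hsub : (Finset.univ \ B).erase j ⊆ (Finset.univ \ A).erase j :=
      Finset.erase_subset_erase j (Finset.sdiff_subset_sdiff (subset_refl _) hAB)
    have := hsupmod _ _ hsub j (hjne A j)
    linarith
  · intro hfu A
    have h0 : g ∅ = 0 := by
      rw [hg, hℓ]
      simp [hfu]
    have := hmonog ∅ A (Finset.empty_subset A)
    linarith
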